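/- Let M be a natural number, let U and V be M×M complex unitary matrices, let s : {1,…,M} → ℝ, and let φ : {1,…,M} → ℝ. Define M×M complex matrices A and B by A_{ik} = Σ_{j=1}^M conj(V_{ji})·cosh(s_j)·conj(U_{kj}) and B_{ik} = −Σ_{j=1}^M conj(V_{ji})·sinh(s_j)·U_{kj}, and define W_{ik} = Σ_{j=1}^M [ (e^{iφ_j} − 1)·A_{ij}·conj(A_{kj}) − (e^{−iφ_j} − 1)·B_{ij}·conj(B_{kj}) ] and Z_{ik} = Σ_{j=1}^M [ −(e^{iφ_j} − 1)·A_{ij}·B_{kj} + (e^{−iφ_j} − 1)·B_{ij}·A_{kj} ]. Then the pair (I + W, Z) satisfies the canonical conditions: (I + W)·(I + W)ᴴ − Z·Zᴴ = I and (I + W)·Zᵀ = Z·(I + W)ᵀ. -/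
import Mathlib


open Matrix

/-- Abstract ring computation behind the canonical conditions. -/
private lemma bog_aux {R : Type*} [Ring R] (a b ah bh at' bt ac bc p q : R)
    (h1 : a * ah - b * bh = 1)
    (h2 : a * bt = b * at')
    (h3 : ah * a - bt * bc = 1)
    (h4 : ah * b = bt * ac)
    (h5 : bh * a = at' * bc)
    (h6 : at' * ac - bh * b = 1)
    (hpq : p * q = 1) (hqp : q * p = 1) :
    ((a*p*ah - b*q*bh) * (a*q*ah - b*p*bh)
      - (-(a*p*bt) + b*q*at') * (-(bc*q*ah) + ac*p*bh) = 1)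
    ∧ ((a*p*ah - b*q*bh) * (-(b*p*at') + a*q*bt)
      = (-(a*p*bt) + b*q*at') * (ac*p*at' - bc*q*bt)) := by
  have h3' : ah * a = 1 + bt * bc := by rw [← h3]; noncomm_ring
  have h6' : bh * b = at' * ac - 1 := by rw [← h6]; noncomm_ring
  have hT1 : (a*p*ah)*(a*q*ah) = a*ah + a*(p*(bt*bc)*q)*ah := by
    have e : (a*p*ah)*(a*q*ah) = a*(p*(ah*a)*q)*ah := by noncomm_ring
    rw [e, h3']
    have e2 : a*(p*(1 + bt*bc)*q)*ah = a*(p*q)*ah + a*(p*(bt*bc)*q)*ah := by noncomm_ring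
    rw [e2, hpq, mul_one]
  have hT2 : (a*p*ah)*(b*p*bh) = a*(p*(bt*ac)*p)*bh := by
    have e : (a*p*ah)*(b*p*bh) = a*(p*(ah*b)*p)*bh := by noncomm_ring
    rw [e, h4]
  have hT3 : (b*q*bh)*(a*q*ah) = b*(q*(at'*bc)*q)*ah := by
    have e : (b*q*bh)*(a*q*ah) = b*(q*(bh*a)*q)*ah := by noncomm_ring
    rw [e, h5]
  have hT4 : (b*q*bh)*(b*p*bh) = b*(q*(at'*ac)*p)*bh - b*bh := by
    have e : (b*q*bh)*(b*p*bh) = b*(q*(bh*b)*p)*bh := by noncomm_ring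
    rw [e, h6']
    have e2 : b*(q*(at'*ac - 1)*p)*bh = b*(q*(at'*ac)*p)*bh - b*(q*p)*bh := by noncomm_ring
    rw [e2, hqp, mul_one]
  have hS1 : (a*p*bt)*(bc*q*ah) = a*(p*(bt*bc)*q)*ah := by noncomm_ring
  have hS2 : (a*p*bt)*(ac*p*bh) = a*(p*(bt*ac)*p)*bh := by noncomm_ring
  have hS3 : (b*q*at')*(bc*q*ah) = b*(q*(at'*bc)*q)*ah := by noncomm_ring
  have hS4 : (b*q*at')*(ac*p*bh) = b*(q*(at'*ac)*p)*bh := by noncomm_ring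
  have hU1 : (a*p*ah)*(b*p*at') = a*(p*(bt*ac)*p)*at' := by
    have e : (a*p*ah)*(b*p*at') = a*(p*(ah*b)*p)*at' := by noncomm_ring
    rw [e, h4]
  have hU2 : (a*p*ah)*(a*q*bt) = a*bt + a*(p*(bt*bc)*q)*bt := by
    have e : (a*p*ah)*(a*q*bt) = a*(p*(ah*a)*q)*bt := by noncomm_ring
    rw [e, h3']
    have e2 : a*(p*(1 + bt*bc)*q)*bt = a*(p*q)*bt + a*(p*(bt*bc)*q)*bt := by noncomm_ring
    rw [e2, hpq, mul_one]
  have hU3 : (b*q*bh)*(b*p*at') = b*(q*(at'*ac)*p)*at' - b*at' := by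
    have e : (b*q*bh)*(b*p*at') = b*(q*(bh*b)*p)*at' := by noncomm_ring
    rw [e, h6']
    have e2 : b*(q*(at'*ac - 1)*p)*at' = b*(q*(at'*ac)*p)*at' - b*(q*p)*at' := by noncomm_ring
    rw [e2, hqp, mul_one]
  have hU4 : (b*q*bh)*(a*q*bt) = b*(q*(at'*bc)*q)*bt := by
    have e : (b*q*bh)*(a*q*bt) = b*(q*(bh*a)*q)*bt := by noncomm_ring
    rw [e, h5]
  have hV1 : (a*p*bt)*(ac*p*at') = a*(p*(bt*ac)*p)*at' := by noncomm_ring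
  have hV2 : (a*p*bt)*(bc*q*bt) = a*(p*(bt*bc)*q)*bt := by noncomm_ring
  have hV3 : (b*q*at')*(ac*p*at') = b*(q*(at'*ac)*p)*at' := by noncomm_ring
  have hV4 : (b*q*at')*(bc*q*bt) = b*(q*(at'*bc)*q)*bt := by noncomm_ring
  constructor
  · have expand : (a*p*ah - b*q*bh) * (a*q*ah - b*p*bh)
        - (-(a*p*bt) + b*q*at') * (-(bc*q*ah) + ac*p*bh)
        = (a*p*ah)*(a*q*ah) - (a*p*ah)*(b*p*bh) - (b*q*bh)*(a*q*ah) + (b*q*bh)*(b*p*bh)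
          - ((a*p*bt)*(bc*q*ah) - (a*p*bt)*(ac*p*bh)
            - (b*q*at')*(bc*q*ah) + (b*q*at')*(ac*p*bh)) := by noncomm_ring
    rw [expand, hT1, hT2, hT3, hT4, hS1, hS2, hS3, hS4, ← h1]
    noncomm_ring
  · have expand2 : (a*p*ah - b*q*bh) * (-(b*p*at') + a*q*bt)
        = -((a*p*ah)*(b*p*at')) + (a*p*ah)*(a*q*bt)
          + (b*q*bh)*(b*p*at') - (b*q*bh)*(a*q*bt) := by noncomm_ring
    have expand3 : (-(a*p*bt) + b*q*at') * (ac*p*at' - bc*q*bt)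
        = -((a*p*bt)*(ac*p*at')) + (a*p*bt)*(bc*q*bt)
          + (b*q*at')*(ac*p*at') - (b*q*at')*(bc*q*bt) := by noncomm_ring
    rw [expand2, expand3, hU1, hU2, hU3, hU4, hV1, hV2, hV3, hV4, h2]
    noncomm_ring

/-- With `A`, `B` the Bogoliubov pair of a Gaussian unitary with
Bloch–Messiah data `(U, s, V)`, the pair `(I + W, Z)` of the conjugated phase shifter
`G₀† P(φ) G₀` satisfies the canonical conditions. -/
theorem conjugated_phase_shifter_canonical_conditions
    (M : ℕ) (U V : Matrix (Fin M) (Fin M) ℂ)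
    (hU : U * Uᴴ = 1) (hV : V * Vᴴ = 1) (s : Fin M → ℝ) (φ : Fin M → ℝ)
    (A B W Z : Matrix (Fin M) (Fin M) ℂ)
    (hA : ∀ i k, A i k = ∑ j, star (V j i) * (Real.cosh (s j) : ℂ) * star (U k j))
    (hB : ∀ i k, B i k = -∑ j, star (V j i) * (Real.sinh (s j) : ℂ) * U k j)
    (hW : ∀ i k, W i k = ∑ j,
      ((Complex.exp (Complex.I * (φ j : ℂ)) - 1) * A i j * star (A k j)
        - (Complex.exp (-(Complex.I * (φ j : ℂ))) - 1) * B i j * star (B k j)))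
    (hZ : ∀ i k, Z i k = ∑ j,
      (-((Complex.exp (Complex.I * (φ j : ℂ)) - 1) * A i j * B k j)
        + (Complex.exp (-(Complex.I * (φ j : ℂ))) - 1) * B i j * A k j)) :
    (1 + W) * (1 + W)ᴴ - Z * Zᴴ = 1 ∧ (1 + W) * Zᵀ = Z * (1 + W)ᵀ := by
  classical
  -- entrywise formula for a product with a diagonal matrix in the middle
  have entry3 : ∀ (X : Matrix (Fin M) (Fin M) ℂ) (d : Fin M → ℂ)
      (Y : Matrix (Fin M) (Fin M) ℂ) (i k : Fin M),
      (X * Matrix.diagonal d * Y) i k = ∑ j, X i j * d j * Y j k := by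
    intro X d Y i k
    rw [Matrix.mul_apply]
    simp only [Matrix.mul_diagonal]
  set Cc : Matrix (Fin M) (Fin M) ℂ :=
    Matrix.diagonal (fun j => (Real.cosh (s j) : ℂ)) with hCcdef
  set Sc : Matrix (Fin M) (Fin M) ℂ :=
    Matrix.diagonal (fun j => (Real.sinh (s j) : ℂ)) with hScdef
  set P : Matrix (Fin M) (Fin M) ℂ :=
    Matrix.diagonal (fun j => Complex.exp (Complex.I * (φ j : ℂ))) with hPdef
  set Q : Matrix (Fin M) (Fin M) ℂ :=
    Matrix.diagonal (fun j => Complex.exp (-(Complex.I * (φ j : ℂ)))) with hQdef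
  set D1 : Matrix (Fin M) (Fin M) ℂ :=
    Matrix.diagonal (fun j => Complex.exp (Complex.I * (φ j : ℂ)) - 1) with hD1def
  set D2 : Matrix (Fin M) (Fin M) ℂ :=
    Matrix.diagonal (fun j => Complex.exp (-(Complex.I * (φ j : ℂ))) - 1) with hD2def
  -- diagonal facts
  have hCcT : Ccᵀ = Cc := Matrix.diagonal_transpose _
  have hScT : Scᵀ = Sc := Matrix.diagonal_transpose _
  have hPT : Pᵀ = P := Matrix.diagonal_transpose _
  have hQT : Qᵀ = Q := Matrix.diagonal_transpose _
  have hCcH : Ccᴴ = Cc := by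
    rw [hCcdef, Matrix.diagonal_conjTranspose]
    refine congrArg Matrix.diagonal (funext fun j => ?_)
    exact Complex.conj_ofReal _
  have hScH : Scᴴ = Sc := by
    rw [hScdef, Matrix.diagonal_conjTranspose]
    refine congrArg Matrix.diagonal (funext fun j => ?_)
    exact Complex.conj_ofReal _
  have hPH : Pᴴ = Q := by
    rw [hPdef, hQdef, Matrix.diagonal_conjTranspose]
    refine congrArg Matrix.diagonal (funext fun j => ?_)
    show (starRingEnd ℂ) (Complex.exp (Complex.I * (φ j : ℂ))) = _
    rw [← Complex.exp_conj]
    congr 1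
    simp [_root_.map_mul, Complex.conj_I, Complex.conj_ofReal]
  have hQH : Qᴴ = P := by
    rw [hPdef, hQdef, Matrix.diagonal_conjTranspose]
    refine congrArg Matrix.diagonal (funext fun j => ?_)
    show (starRingEnd ℂ) (Complex.exp (-(Complex.I * (φ j : ℂ)))) = _
    rw [← Complex.exp_conj]
    congr 1
    simp [_root_.map_mul, Complex.conj_I, Complex.conj_ofReal]
  have hCS : Cc * Sc = Sc * Cc := by
    rw [hCcdef, hScdef, Matrix.diagonal_mul_diagonal, Matrix.diagonal_mul_diagonal]
    refine congrArg Matrix.diagonal (funext fun j => ?_)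
    ring
  have hC2S2 : Cc * Cc - Sc * Sc = 1 := by
    rw [hCcdef, hScdef, Matrix.diagonal_mul_diagonal, Matrix.diagonal_mul_diagonal,
      Matrix.diagonal_sub, ← Matrix.diagonal_one]
    refine congrArg Matrix.diagonal (funext fun j => ?_)
    have h := Real.cosh_sq_sub_sinh_sq (s j)
    have h' : Real.cosh (s j) * Real.cosh (s j) - Real.sinh (s j) * Real.sinh (s j) = 1 := by
      nlinarith [h]
    exact_mod_cast h'
  have hPQ : P * Q = 1 := by
    rw [hPdef, hQdef, Matrix.diagonal_mul_diagonal, ← Matrix.diagonal_one]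
    refine congrArg Matrix.diagonal (funext fun j => ?_)
    rw [← Complex.exp_add]
    simp
  have hQP : Q * P = 1 := by
    rw [hPdef, hQdef, Matrix.diagonal_mul_diagonal, ← Matrix.diagonal_one]
    refine congrArg Matrix.diagonal (funext fun j => ?_)
    rw [← Complex.exp_add]
    simp
  have hD1e : D1 = P - 1 := by
    rw [hD1def, hPdef, ← Matrix.diagonal_one, Matrix.diagonal_sub]
  have hD2e : D2 = Q - 1 := by
    rw [hD2def, hQdef, ← Matrix.diagonal_one, Matrix.diagonal_sub]
  -- unitarity facts
  have hUH : Uᴴ * U = 1 := mul_eq_one_comm.mp hU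
  have hVH : Vᴴ * V = 1 := mul_eq_one_comm.mp hV
  have htc : ∀ X : Matrix (Fin M) (Fin M) ℂ, Xᵀᴴ = Xᴴᵀ := by
    intro X
    ext i j
    simp [Matrix.conjTranspose_apply]
  have hUcT : Uᵀ * Uᴴᵀ = 1 := by
    rw [← Matrix.transpose_mul, hUH, Matrix.transpose_one]
  have hUcT2 : Uᴴᵀ * Uᵀ = 1 := by
    rw [← Matrix.transpose_mul, hU, Matrix.transpose_one]
  have hVcT : Vᴴᵀ * Vᵀ = 1 := by
    rw [← Matrix.transpose_mul, hV, Matrix.transpose_one]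
  -- product expressions for A and B
  have hA' : A = Vᴴ * Cc * Uᴴ := by
    ext i k
    rw [hA, entry3]
    exact Finset.sum_congr rfl fun j _ => by
      simp only [Matrix.conjTranspose_apply]
  have hB' : B = -(Vᴴ * Sc * Uᵀ) := by
    ext i k
    rw [hB, Matrix.neg_apply, entry3]
    congr 1

  have hAH : Aᴴ = U * Cc * V := by
    rw [hA', Matrix.conjTranspose_mul, Matrix.conjTranspose_mul,
      Matrix.conjTranspose_conjTranspose, Matrix.conjTranspose_conjTranspose, hCcH]
    noncomm_ring
  have hAT : Aᵀ = Uᴴᵀ * Cc * Vᴴᵀ := by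
    rw [hA', Matrix.transpose_mul, Matrix.transpose_mul, hCcT]
    noncomm_ring
  have hAc : Aᴴᵀ = Vᵀ * Cc * Uᵀ := by
    rw [hAH, Matrix.transpose_mul, Matrix.transpose_mul, hCcT]
    noncomm_ring
  have hBH : Bᴴ = -(Uᴴᵀ * Sc * V) := by
    rw [hB', Matrix.conjTranspose_neg, Matrix.conjTranspose_mul, Matrix.conjTranspose_mul,
      Matrix.conjTranspose_conjTranspose, hScH, htc]
    noncomm_ring
  have hBT : Bᵀ = -(U * Sc * Vᴴᵀ) := by
    rw [hB', Matrix.transpose_neg, Matrix.transpose_mul, Matrix.transpose_mul, hScT,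
      Matrix.transpose_transpose]
    noncomm_ring
  have hBc : Bᴴᵀ = -(Vᵀ * Sc * Uᴴ) := by
    rw [hBH, Matrix.transpose_neg, Matrix.transpose_mul, Matrix.transpose_mul, hScT,
      Matrix.transpose_transpose]
    noncomm_ring
  -- cancellation helper
  have cancel : ∀ (G H : Matrix (Fin M) (Fin M) ℂ), G * H = 1 →
      ∀ (X D E Y : Matrix (Fin M) (Fin M) ℂ), (X*D*G)*(H*E*Y) = X*(D*E)*Y := by
    intro G H hGH X D E Y
    calc (X*D*G)*(H*E*Y) = X*D*(G*H)*(E*Y) := by noncomm_ring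
    _ = X*(D*E)*Y := by rw [hGH, mul_one]; noncomm_ring
  -- symplectic relations
  have h1 : A * Aᴴ - B * Bᴴ = 1 := by
    rw [hAH, hBH, hA', hB', neg_mul_neg, cancel Uᴴ U hUH, cancel Uᵀ Uᴴᵀ hUcT]
    calc Vᴴ*(Cc*Cc)*V - Vᴴ*(Sc*Sc)*V = Vᴴ*(Cc*Cc - Sc*Sc)*V := by noncomm_ring
    _ = 1 := by rw [hC2S2, mul_one, hVH]
  have h2 : A * Bᵀ = B * Aᵀ := by
    rw [hBT, hAT, hA', hB', mul_neg, neg_mul, cancel Uᴴ U hUH, cancel Uᵀ Uᴴᵀ hUcT, hCS]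
  have h3 : Aᴴ * A - Bᵀ * Bᴴᵀ = 1 := by
    rw [hBc, hBT, hAH, hA', neg_mul_neg, cancel V Vᴴ hV, cancel Vᴴᵀ Vᵀ hVcT]
    calc U*(Cc*Cc)*Uᴴ - U*(Sc*Sc)*Uᴴ = U*(Cc*Cc - Sc*Sc)*Uᴴ := by noncomm_ring
    _ = 1 := by rw [hC2S2, mul_one, hU]
  have h4 : Aᴴ * B = Bᵀ * Aᴴᵀ := by
    rw [hAc, hBT, hAH, hB', mul_neg, neg_mul, cancel V Vᴴ hV, cancel Vᴴᵀ Vᵀ hVcT, hCS]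
  have h5 : Bᴴ * A = Aᵀ * Bᴴᵀ := by
    rw [hBc, hAT, hBH, hA', mul_neg, neg_mul, cancel V Vᴴ hV, cancel Vᴴᵀ Vᵀ hVcT, hCS]
  have h6 : Aᵀ * Aᴴᵀ - Bᴴ * B = 1 := by
    rw [hAc, hAT, hBH, hB', neg_mul_neg, cancel Vᴴᵀ Vᵀ hVcT, cancel V Vᴴ hV]
    calc Uᴴᵀ*(Cc*Cc)*Uᵀ - Uᴴᵀ*(Sc*Sc)*Uᵀ = Uᴴᵀ*(Cc*Cc - Sc*Sc)*Uᵀ := by noncomm_ring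
    _ = 1 := by rw [hC2S2, mul_one, hUcT2]
  -- forms of W and Z
  have hWform : W = A * D1 * Aᴴ - B * D2 * Bᴴ := by
    ext i k
    rw [hW, Matrix.sub_apply, entry3, entry3, ← Finset.sum_sub_distrib]
    exact Finset.sum_congr rfl fun j _ => by
      simp only [Matrix.conjTranspose_apply]
      ring
  have hZform : Z = -(A * D1 * Bᵀ) + B * D2 * Aᵀ := by
    ext i k
    rw [hZ, Matrix.add_apply, Matrix.neg_apply, entry3, entry3]
    rw [← Finset.sum_neg_distrib, ← Finset.sum_add_distrib]
    exact Finset.sum_congr rfl fun j _ => by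
      simp only [Matrix.transpose_apply]
      ring
  have hIWeq : 1 + W = A*P*Aᴴ - B*Q*Bᴴ := by
    have e : 1 + W = A*P*Aᴴ - B*Q*Bᴴ - (A*Aᴴ - B*Bᴴ) + 1 := by
      rw [hWform, hD1e, hD2e]; noncomm_ring
    rw [e, h1]
    noncomm_ring
  have hZeq : Z = -(A*P*Bᵀ) + B*Q*Aᵀ := by
    have e : Z = -(A*P*Bᵀ) + B*Q*Aᵀ + (A*Bᵀ - B*Aᵀ) := by
      rw [hZform, hD1e, hD2e]; noncomm_ring
    rw [e, h2]
    noncomm_ring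
  have hIWH : (1 + W)ᴴ = A*Q*Aᴴ - B*P*Bᴴ := by
    rw [hIWeq, Matrix.conjTranspose_sub, Matrix.conjTranspose_mul, Matrix.conjTranspose_mul,
      Matrix.conjTranspose_mul, Matrix.conjTranspose_mul,
      Matrix.conjTranspose_conjTranspose, Matrix.conjTranspose_conjTranspose, hPH, hQH]
    noncomm_ring
  have hZH : Zᴴ = -(Bᴴᵀ*Q*Aᴴ) + Aᴴᵀ*P*Bᴴ := by
    rw [hZeq, Matrix.conjTranspose_add, Matrix.conjTranspose_neg, Matrix.conjTranspose_mul,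
      Matrix.conjTranspose_mul, Matrix.conjTranspose_mul, Matrix.conjTranspose_mul,
      hPH, hQH, htc, htc]
    noncomm_ring
  have hZT : Zᵀ = -(B*P*Aᵀ) + A*Q*Bᵀ := by
    rw [hZeq, Matrix.transpose_add, Matrix.transpose_neg, Matrix.transpose_mul,
      Matrix.transpose_mul, Matrix.transpose_mul, Matrix.transpose_mul,
      hPT, hQT, Matrix.transpose_transpose, Matrix.transpose_transpose]
    noncomm_ring
  have hIWT : (1 + W)ᵀ = Aᴴᵀ*P*Aᵀ - Bᴴᵀ*Q*Bᵀ := by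
    rw [hIWeq, Matrix.transpose_sub, Matrix.transpose_mul, Matrix.transpose_mul,
      Matrix.transpose_mul, Matrix.transpose_mul, hPT, hQT]
    noncomm_ring
  obtain ⟨k1, k2⟩ := bog_aux A B Aᴴ Bᴴ Aᵀ Bᵀ Aᴴᵀ Bᴴᵀ P Q h1 h2 h3 h4 h5 h6 hPQ hQP
  constructor
  · calc (1 + W) * (1 + W)ᴴ - Z * Zᴴ
        = (A*P*Aᴴ - B*Q*Bᴴ) * (A*Q*Aᴴ - B*P*Bᴴ)
          - (-(A*P*Bᵀ) + B*Q*Aᵀ) * (-(Bᴴᵀ*Q*Aᴴ) + Aᴴᵀ*P*Bᴴ) := by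
          rw [hIWH, hZH, hIWeq, hZeq]
    _ = 1 := k1
  · calc (1 + W) * Zᵀ
        = (A*P*Aᴴ - B*Q*Bᴴ) * (-(B*P*Aᵀ) + A*Q*Bᵀ) := by rw [hZT, hIWeq]
    _ = (-(A*P*Bᵀ) + B*Q*Aᵀ) * (Aᴴᵀ*P*Aᵀ - Bᴴᵀ*Q*Bᵀ) := k2
    _ = Z * (1 + W)ᵀ := by rw [hIWT, hZeq]
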